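/- Fix d = 2m, a real matrix A, and a time-symmetric second-order real basic method S for A which in addition is symplectic: S(z)ᵀ·J·S(z) = J for all z ∈ ℂ, where J is the canonical symplectic 2m×2m matrix. Let n ≥ 2 and let α_1, …, α_s ∈ ℂ be symmetric-conjugate (α_{s+1−j} = conj(α_j)), and suppose the composition P(h) = S(α_s h)⋯S(α_1 h) satisfies (fun h : ℝ => P(h) − exp(h·A)) = O(h^{2n+1}) as h → 0 (order 2n). Let R(h) be the entrywise real part of P(h). Then R is pseudo-symplectic of order 4n+3, i.e. (fun h : ℝ => R(h)ᵀ·J·R(h) − J) is O(h^{4n+4}) as h → 0. -/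

import Mathlib

open Matrix Asymptotics Filter NormedSpace

attribute [local instance] Matrix.normedAddCommGroup Matrix.normedSpace

namespace SCaux

variable {N : Type*} [Fintype N] [DecidableEq N]

lemma norm_matrix_mul_le (M P : Matrix N N ℂ) :
    ‖M * P‖ ≤ (Fintype.card N) * ‖M‖ * ‖P‖ := by
  refine (Matrix.norm_le_iff (by positivity)).2 fun i j => ?_
  rw [Matrix.mul_apply]
  calc ‖∑ k, M i k * P k j‖ ≤ ∑ k, ‖M i k * P k j‖ := norm_sum_le _ _
    _ ≤ ∑ _k : N, ‖M‖ * ‖P‖ := Finset.sum_le_sum fun k _ => by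
        rw [norm_mul]
        exact mul_le_mul (Matrix.norm_entry_le_entrywise_sup_norm M)
          (Matrix.norm_entry_le_entrywise_sup_norm P) (norm_nonneg _) (norm_nonneg _)
    _ = Fintype.card N * ‖M‖ * ‖P‖ := by
        rw [Finset.sum_const, Finset.card_univ, nsmul_eq_mul, mul_assoc]

lemma isBigO_matmul {l : Filter ℝ} {f g : ℝ → Matrix N N ℂ} {u v : ℝ → ℝ}
    (hf : f =O[l] u) (hg : g =O[l] v) :
    (fun t => f t * g t) =O[l] fun t => u t * v t := by
  refine IsBigO.trans ?_ (hf.norm_left.mul hg.norm_left)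
  refine IsBigO.of_bound (Fintype.card N) (Filter.Eventually.of_forall fun t => ?_)
  have h1 : ‖(‖f t‖ * ‖g t‖ : ℝ)‖ = ‖f t‖ * ‖g t‖ := Real.norm_of_nonneg (by positivity)
  rw [h1, ← mul_assoc]
  exact norm_matrix_mul_le _ _

lemma isBigO_transpose {l : Filter ℝ} {f : ℝ → Matrix N N ℂ} {u : ℝ → ℝ}
    (hf : f =O[l] u) : (fun t => (f t)ᵀ) =O[l] u := by
  rw [isBigO_iff] at hf ⊢
  rcases hf with ⟨C, hC⟩
  exact ⟨C, by filter_upwards [hC] with t ht; rwa [Matrix.norm_transpose]⟩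

lemma list_prod_pairs_inv {M : Type*} [Monoid M] :
    ∀ (l : List (M × M)), (∀ p ∈ l, p.1 * p.2 = 1) →
      (l.map Prod.fst).prod * ((l.map Prod.snd).reverse).prod = 1
  | [], _ => by simp
  | p :: t, h => by
    have ht : ∀ q ∈ t, q.1 * q.2 = 1 := fun q hq => h q (List.mem_cons_of_mem _ hq)
    have hp : p.1 * p.2 = 1 := h p (List.mem_cons_self)
    simp only [List.map_cons, List.prod_cons, List.reverse_cons, List.prod_append,
      List.prod_cons, List.prod_nil, mul_one]
    rw [mul_assoc, show (List.map Prod.fst t).prod * ((List.map Prod.snd t).reverse.prod * p.2)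
        = ((List.map Prod.fst t).prod * (List.map Prod.snd t).reverse.prod) * p.2 from
        (mul_assoc _ _ _).symm,
      list_prod_pairs_inv t ht, one_mul, hp]

lemma list_prod_symplectic (J0 : Matrix N N ℂ) :
    ∀ (l : List (Matrix N N ℂ)), (∀ B ∈ l, Bᵀ * J0 * B = J0) →
      (l.prod)ᵀ * J0 * l.prod = J0
  | [], _ => by simp
  | B :: t, h => by
    have ht := list_prod_symplectic J0 t fun q hq => h q (List.mem_cons_of_mem _ hq)
    have hB : Bᵀ * J0 * B = J0 := h B (List.mem_cons_self)
    rw [List.prod_cons, Matrix.transpose_mul]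
    calc t.prodᵀ * Bᵀ * J0 * (B * t.prod) = t.prodᵀ * (Bᵀ * J0 * B) * t.prod := by
          noncomm_ring
      _ = J0 := by rw [hB, ht]

lemma ofFn_comp_rev {β : Type*} {s : ℕ} (g : Fin s → β) :
    List.ofFn (fun j => g (Fin.rev j)) = (List.ofFn g).reverse := by
  rw [List.ofFn_eq_map, List.ofFn_eq_map, ← List.map_reverse, List.finRange_reverse,
    List.map_map]
  rfl

lemma isBigO_nhds_of_punctured {E' : Type*} [NormedAddCommGroup E'] {f : ℝ → E'} {g : ℝ → ℝ}
    (h0 : f 0 = 0) (h : f =O[nhdsWithin (0:ℝ) {(0:ℝ)}ᶜ] g) : f =O[nhds 0] g := by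
  rw [← nhdsNE_sup_pure (0:ℝ)]
  refine h.sup (IsBigO.of_bound 1 ?_)
  rw [Filter.eventually_pure, h0]
  simp

lemma pow_isBigO_pow {a b : ℕ} (hab : a ≤ b) :
    (fun t : ℝ => t ^ b) =O[nhds (0:ℝ)] fun t => t ^ a := by
  rw [isBigO_iff]
  refine ⟨1, ?_⟩
  have h1 : ∀ᶠ t : ℝ in nhds 0, ‖t‖ ≤ 1 := by
    filter_upwards [Metric.ball_mem_nhds (0:ℝ) one_pos] with t ht
    rw [Metric.mem_ball, dist_zero_right] at ht
    exact ht.le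
  filter_upwards [h1] with t ht
  rw [norm_pow, norm_pow, one_mul]
  exact pow_le_pow_of_le_one (norm_nonneg t) ht hab

lemma isBigO_comp_neg {E' : Type*} [NormedAddCommGroup E'] {f : ℝ → E'} {k : ℕ}
    (h : f =O[nhds (0:ℝ)] fun t => t ^ k) :
    (fun t => f (-t)) =O[nhds (0:ℝ)] fun t => t ^ k := by
  have hneg : Filter.Tendsto (fun t : ℝ => -t) (nhds 0) (nhds 0) := by
    simpa using (continuous_neg.tendsto (0:ℝ))
  have h2 := h.comp_tendsto hneg
  refine h2.trans (IsBigO.of_bound 1 (Filter.Eventually.of_forall fun t => ?_))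
  simp [Function.comp]

lemma eq_zero_of_isBigO_pow_succ {E' : Type*} [NormedAddCommGroup E'] [NormedSpace ℝ E']
    {k : ℕ} {c : E'} (h : (fun t : ℝ => t ^ k • c) =O[nhds (0:ℝ)] fun t => t ^ (k+1)) :
    c = 0 := by
  have h2 : (fun _ : ℝ => c) =O[nhdsWithin (0:ℝ) {(0:ℝ)}ᶜ] fun t => t := by
    rw [isBigO_iff] at h ⊢
    rcases h with ⟨C, hC⟩
    refine ⟨C, ?_⟩
    filter_upwards [hC.filter_mono nhdsWithin_le_nhds, self_mem_nhdsWithin] with t ht ht0'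
    have ht0 : t ≠ 0 := ht0'
    have habs : (0:ℝ) < |t| ^ k := pow_pos (abs_pos.2 ht0) k
    rw [norm_smul, norm_pow, Real.norm_eq_abs] at ht
    rw [norm_pow, Real.norm_eq_abs, pow_succ] at ht
    rw [Real.norm_eq_abs]
    calc ‖c‖ = |t| ^ k * ‖c‖ / |t| ^ k := by field_simp
      _ ≤ C * (|t| ^ k * |t|) / |t| ^ k := by gcongr
      _ = C * |t| := by field_simp
  have h3 : Filter.Tendsto (fun _ : ℝ => c) (nhdsWithin (0:ℝ) {(0:ℝ)}ᶜ) (nhds 0) :=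
    h2.trans_tendsto (Filter.tendsto_id.mono_left nhdsWithin_le_nhds)
  exact tendsto_nhds_unique tendsto_const_nhds h3

lemma keyR {E' : Type*} [NormedAddCommGroup E'] [NormedSpace ℝ E'] (k : ℕ) :
    ∀ (f : ℝ → E'), AnalyticAt ℝ f 0 → f =O[nhdsWithin (0:ℝ) {(0:ℝ)}ᶜ] (fun t => t ^ k) →
      ∃ c : E', (fun t => f t - t ^ k • c) =O[nhds (0:ℝ)] fun t => t ^ (k+1) := by
  induction k with
  | zero =>
    intro f hf _
    refine ⟨f 0, ?_⟩
    have h := hf.differentiableAt.isBigO_sub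
    simp only [sub_zero] at h
    simpa only [pow_zero, one_smul, zero_add, pow_one] using h
  | succ k ih =>
    intro f hf hO
    obtain ⟨p, hp⟩ := hf
    have hfanal : AnalyticAt ℝ f 0 := ⟨p, hp⟩
    have hf0 : f 0 = 0 := by
      have l1 : Filter.Tendsto f (nhdsWithin (0:ℝ) {(0:ℝ)}ᶜ) (nhds (f 0)) :=
        (hfanal.continuousAt.tendsto).mono_left nhdsWithin_le_nhds
      have l2 : Filter.Tendsto (fun t : ℝ => t ^ (k+1)) (nhdsWithin (0:ℝ) {(0:ℝ)}ᶜ) (nhds 0) := by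
        have h3 := (continuous_pow (k+1)).tendsto (0:ℝ)
        rw [zero_pow (Nat.succ_ne_zero k)] at h3
        exact h3.mono_left nhdsWithin_le_nhds
      exact tendsto_nhds_unique l1 (hO.trans_tendsto l2)
    set g := dslope f 0 with hgdef
    have hganl : AnalyticAt ℝ g 0 := ⟨p.fslope, hp.has_fpower_series_dslope_fslope⟩
    have hfg : ∀ t : ℝ, f t = t • g t := by
      intro t
      have h4 := sub_smul_dslope f 0 t
      rw [sub_zero, hf0, sub_zero] at h4
      exact h4.symm
    have hgO : g =O[nhdsWithin (0:ℝ) {(0:ℝ)}ᶜ] fun t => t ^ k := by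
      rw [isBigO_iff] at hO ⊢
      rcases hO with ⟨C, hC⟩
      refine ⟨C, ?_⟩
      filter_upwards [hC, self_mem_nhdsWithin] with t ht ht0'
      have ht0 : t ≠ 0 := ht0'
      have habs : (0:ℝ) < |t| := abs_pos.2 ht0
      rw [hfg t, norm_smul, Real.norm_eq_abs, norm_pow, Real.norm_eq_abs, pow_succ] at ht
      rw [norm_pow, Real.norm_eq_abs]
      calc ‖g t‖ = |t| * ‖g t‖ / |t| := by field_simp
        _ ≤ C * (|t| ^ k * |t|) / |t| := by gcongr
        _ = C * |t| ^ k := by field_simp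
    obtain ⟨c, hc⟩ := ih g hganl hgO
    refine ⟨c, ?_⟩
    have heq : ∀ t : ℝ, f t - t ^ (k+1) • c = t • (g t - t ^ k • c) := by
      intro t
      rw [smul_sub, ← hfg t, smul_smul, ← pow_succ']
    apply isBigO_nhds_of_punctured
    · rw [heq 0, zero_smul]
    · rw [isBigO_iff] at hc ⊢
      rcases hc with ⟨C, hC⟩
      refine ⟨C, ?_⟩
      filter_upwards [hC.filter_mono nhdsWithin_le_nhds] with t ht
      rw [heq t, norm_smul]
      calc ‖t‖ * ‖g t - t ^ k • c‖ ≤ ‖t‖ * (C * ‖t ^ (k+1)‖) :=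
            mul_le_mul_of_nonneg_left ht (norm_nonneg t)
        _ = C * ‖t ^ (k+1+1)‖ := by rw [norm_pow, norm_pow]; ring

section Part2


lemma analyticAt_matrix {f : ℝ → Matrix N N ℂ} {x : ℝ}
    (h : ∀ i j, AnalyticAt ℝ (fun t => f t i j) x) : AnalyticAt ℝ f x :=
  AnalyticAt.pi fun i => AnalyticAt.pi fun j => h i j

lemma analyticAt_entry {f : ℝ → Matrix N N ℂ} {x : ℝ} (hf : AnalyticAt ℝ f x) (i j : N) :
    AnalyticAt ℝ (fun t => f t i j) x :=
  analyticAt_pi_iff.1 ((analyticAt_pi_iff.1 hf) i) j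

lemma analyticAt_matmul {f g : ℝ → Matrix N N ℂ} {x : ℝ}
    (hf : AnalyticAt ℝ f x) (hg : AnalyticAt ℝ g x) :
    AnalyticAt ℝ (fun t => f t * g t) x := by
  apply analyticAt_matrix
  intro i j
  have : (fun t => (f t * g t) i j) = fun t => ∑ k, f t i k * g t k j := by
    funext t; simp [Matrix.mul_apply]
  rw [this]
  exact Finset.analyticAt_fun_sum _ fun k _ =>
    (analyticAt_entry hf i k).mul (analyticAt_entry hg k j)

lemma analyticAt_list_prod {x : ℝ} :
    ∀ (l : List (ℝ → Matrix N N ℂ)), (∀ f ∈ l, AnalyticAt ℝ f x) →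
      AnalyticAt ℝ (fun t => (l.map (fun f => f t)).prod) x
  | [], _ => by simpa using analyticAt_const
  | f :: l, h => by
    simp only [List.map_cons, List.prod_cons]
    exact analyticAt_matmul (h f (List.mem_cons_self))
      (analyticAt_list_prod l fun q hq => h q (List.mem_cons_of_mem _ hq))

lemma exp_map_conj' (M : Matrix N N ℂ) :
    (exp M).map (starRingEnd ℂ) = exp (M.map (starRingEnd ℂ)) := by
  letI : SeminormedRing (Matrix N N ℂ) := Matrix.linftyOpSemiNormedRing
  letI : NormedRing (Matrix N N ℂ) := Matrix.linftyOpNormedRing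
  letI : NormedAlgebra ℂ (Matrix N N ℂ) := Matrix.linftyOpNormedAlgebra
  haveI : @CompleteSpace (Matrix N N ℂ) (PseudoMetricSpace.toUniformSpace
      (self := (SeminormedRing.toPseudoMetricSpace : PseudoMetricSpace (Matrix N N ℂ)))) :=
    FiniteDimensional.complete ℂ _
  have hcont : Continuous fun M : Matrix N N ℂ => M.map (starRingEnd ℂ) :=
    Continuous.matrix_map continuous_id continuous_star
  exact map_exp_of_mem_ball (𝕂 := ℂ) ((starRingEnd ℂ).mapMatrix) hcont M <|
    (expSeries_radius_eq_top ℂ (Matrix N N ℂ)).symm ▸ edist_lt_top _ _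

lemma exp_inv_mul (M : Matrix N N ℂ) : exp (-M) * exp M = 1 := by
  rw [← Matrix.exp_add_of_commute (-M) M (Commute.neg_left (Commute.refl M)),
    neg_add_cancel, exp_zero]

lemma isBigO_map_conj {l : Filter ℝ} {f : ℝ → Matrix N N ℂ} {u : ℝ → ℝ}
    (hf : f =O[l] u) : (fun t => (f t).map (starRingEnd ℂ)) =O[l] u := by
  rw [isBigO_iff] at hf ⊢
  rcases hf with ⟨C, hC⟩
  refine ⟨C, ?_⟩
  filter_upwards [hC] with t ht
  rwa [Matrix.norm_map_eq _ _ (fun z : ℂ => (RCLike.norm_conj z : ‖(starRingEnd ℂ) z‖ = ‖z‖))]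

end Part2

end SCaux

/-- The canonical symplectic matrix `J = [[0, 1], [-1, 0]]` on `ℝ^(m+m)`. -/
noncomputable def canonicalJ (m : ℕ) : Matrix (Fin (m + m)) (Fin (m + m)) ℝ :=
  (Matrix.fromBlocks 0 1 (-1) 0).submatrix finSumFinEquiv.symm finSumFinEquiv.symm

open SCaux in
/-- Proposition 2(b) of the paper, linear/matrix form, symplecticity part:
the real part of a symmetric-conjugate composition of even order `2n` of a
time-symmetric second-order real symplectic basic method is pseudo-symplectic
of order `4n+3`. -/
theorem symmetric_conjugate_even_order_pseudo_symplectic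
    (m s n : ℕ) (hn : 2 ≤ n)
    (A : Matrix (Fin (m + m)) (Fin (m + m)) ℝ)
    (S : ℂ → Matrix (Fin (m + m)) (Fin (m + m)) ℂ)
    -- `S` is analytic
    (hAnal : ∀ z : ℂ, AnalyticAt ℂ S z)
    -- `S` is time-symmetric
    (hTS : ∀ z : ℂ, S z * S (-z) = 1)
    -- `S` is real
    (hReal : ∀ z : ℂ, (S z).map (starRingEnd ℂ) = S (starRingEnd ℂ z))
    -- `S` is a second-order approximation of `exp (h A)`
    (hOrd2 : (fun h : ℝ => S (h : ℂ) - NormedSpace.exp ((h : ℂ) • A.map Complex.ofReal))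
      =O[nhds 0] fun h : ℝ => h ^ 3)
    -- `S` is symplectic
    (hSymp : ∀ z : ℂ, (S z)ᵀ * (canonicalJ m).map Complex.ofReal * S z
      = (canonicalJ m).map Complex.ofReal)
    -- symmetric-conjugate coefficients
    (α : Fin s → ℂ)
    (hSC : ∀ j : Fin s, α (Fin.rev j) = starRingEnd ℂ (α j))
    -- the composition `P h = S (α_s h) ⋯ S (α_1 h)`
    (P : ℝ → Matrix (Fin (m + m)) (Fin (m + m)) ℂ)
    (hP : ∀ h : ℝ, P h = ((List.ofFn fun j : Fin s => S (α j * (h : ℂ))).reverse).prod)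
    -- ... is of even order `2n`
    (hPord : (fun h : ℝ => P h - NormedSpace.exp ((h : ℂ) • A.map Complex.ofReal))
      =O[nhds 0] fun h : ℝ => h ^ (2 * n + 1))
    -- `R h` is the entrywise real part of `P h`
    (R : ℝ → Matrix (Fin (m + m)) (Fin (m + m)) ℝ)
    (hR : ∀ h : ℝ, R h = (P h).map Complex.re) :
    (fun h : ℝ => (R h)ᵀ * canonicalJ m * R h - canonicalJ m)
      =O[nhds 0] fun h : ℝ => h ^ (4 * n + 4) := by
  -- Notation
  set Ac : Matrix (Fin (m + m)) (Fin (m + m)) ℂ := A.map Complex.ofReal with hAc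
  set Jc : Matrix (Fin (m + m)) (Fin (m + m)) ℂ := (canonicalJ m).map Complex.ofReal with hJcdef
  -- `S 0 = 1`
  have hS0 : S 0 = 1 := by
    rcases isBigO_iff.1 hOrd2 with ⟨C, hC⟩
    have h2 := hC.self_of_nhds
    simp only [Complex.ofReal_zero, zero_smul, zero_pow (three_ne_zero),
      norm_zero, mul_zero] at h2
    have hez : NormedSpace.exp (0 : Matrix (Fin (m+m)) (Fin (m+m)) ℂ) = 1 := exp_zero
    rw [hez] at h2
    exact sub_eq_zero.1 (norm_le_zero_iff.1 h2)
  -- `P 0 = 1`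
  have hP0 : P 0 = 1 := by
    rw [hP 0]
    simp [Complex.ofReal_zero, mul_zero, hS0, List.ofFn_const]
  -- `P` is analytic at `0`
  have hSj : ∀ (j : Fin s), AnalyticAt ℝ (fun t : ℝ => S (α j * (t : ℂ))) 0 := by
    intro j
    have hlin : AnalyticAt ℝ (fun t : ℝ => α j * (t : ℂ)) 0 := by
      have := ((α j) • Complex.ofRealCLM).analyticAt (0 : ℝ)
      convert this using 1
      funext t
      simp [Complex.ofRealCLM_apply, smul_eq_mul]
    exact ((hAnal _).restrictScalars).comp hlin
  have hPanal : AnalyticAt ℝ P 0 := by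
    have h3 := analyticAt_list_prod (x := (0:ℝ))
      ((List.ofFn fun j : Fin s => fun t : ℝ => S (α j * (t : ℂ))).reverse)
      (by
        intro f hf
        rw [List.mem_reverse, List.mem_ofFn] at hf
        obtain ⟨j, rfl⟩ := hf
        exact hSj j)
    refine h3.congr (Filter.Eventually.of_forall fun t => ?_)
    rw [hP t]
    simp only [List.map_reverse, List.map_ofFn]
    rfl
  -- conjugated products
  have hmapP : ∀ t : ℝ, (P t).map (starRingEnd ℂ)
      = ((List.ofFn fun j : Fin s => S ((starRingEnd ℂ) (α j * (t : ℂ)))).reverse).prod := by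
    intro t
    rw [hP t]
    have h4 : ∀ l : List (Matrix (Fin (m+m)) (Fin (m+m)) ℂ),
        (l.prod).map (starRingEnd ℂ) = (l.map (fun M => M.map (starRingEnd ℂ))).prod := by
      intro l
      exact
        map_list_prod ((starRingEnd ℂ).mapMatrix : Matrix (Fin (m+m)) (Fin (m+m)) ℂ →+* _) l
    rw [h4]
    congr 1
    rw [List.map_reverse]
    congr 1
    rw [List.map_ofFn]
    congr 1
    funext j
    exact hReal (α j * (t : ℂ))
  have hσPm : ∀ t : ℝ, (P (-t)).map (starRingEnd ℂ)
      = (List.ofFn fun j : Fin s => S (-(α j * (t : ℂ)))).prod := by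
    intro t
    rw [hmapP (-t)]
    have h5 : (List.ofFn fun j : Fin s => S ((starRingEnd ℂ) (α j * ((-t : ℝ) : ℂ))))
        = List.ofFn (fun j : Fin s => (fun j' : Fin s => S (-(α j' * (t : ℂ)))) (Fin.rev j)) := by
      congr 1
      funext j
      show S ((starRingEnd ℂ) (α j * ((-t : ℝ) : ℂ))) = S (-(α (Fin.rev j) * (t : ℂ)))
      congr 1
      rw [_root_.map_mul, ← hSC j, Complex.ofReal_neg, map_neg, Complex.conj_ofReal]
      ring
    rw [h5, ofFn_comp_rev (fun j' : Fin s => S (-(α j' * (t : ℂ)))), List.reverse_reverse]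
  have hσPinv : ∀ t : ℝ, (P (-t)).map (starRingEnd ℂ) * P t = 1 := by
    intro t
    rw [hσPm t, hP t]
    have h6 := list_prod_pairs_inv
      (List.ofFn fun j : Fin s => (S (-(α j * (t : ℂ))), S (α j * (t : ℂ))))
      (by
        intro q hq
        rw [List.mem_ofFn] at hq
        obtain ⟨j, rfl⟩ := hq
        exact mul_eq_one_comm.1 (hTS (α j * (t : ℂ))))
    simpa [List.map_ofFn, Function.comp_def] using h6
  -- symplecticity of `P`
  have hsymP : ∀ t : ℝ, (P t)ᵀ * Jc * P t = Jc := by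
    intro t
    rw [hP t]
    apply list_prod_symplectic
    intro B hB
    rw [List.mem_reverse, List.mem_ofFn] at hB
    obtain ⟨j, rfl⟩ := hB
    exact hSymp _
  -- the error term
  set Ef : ℝ → Matrix (Fin (m+m)) (Fin (m+m)) ℂ :=
    fun t => P t - exp ((t : ℂ) • Ac) with hEf
  have hEO : Ef =O[nhds 0] fun t => t ^ (2*n+1) := hPord
  have hcast : ∀ t : ℝ, (((-t : ℝ)) : ℂ) • Ac = -((t : ℂ) • Ac) := by
    intro t; push_cast; rw [neg_smul]
  -- `exp` of a real multiple of `Ac` is fixed by conjugation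
  have hexpconj : ∀ t : ℝ, (exp ((t : ℂ) • Ac)).map (starRingEnd ℂ) = exp ((t : ℂ) • Ac) := by
    intro t
    rw [exp_map_conj']
    congr 1
    ext i j
    simp [Matrix.map_apply, Matrix.smul_apply, hAc, Complex.conj_ofReal, smul_eq_mul]
  -- `Q` : twice the imaginary part
  set Qf : ℝ → Matrix (Fin (m+m)) (Fin (m+m)) ℂ :=
    fun t => P t - (P t).map (starRingEnd ℂ) with hQf
  have hQE : ∀ t : ℝ, Qf t = Ef t - (Ef t).map (starRingEnd ℂ) := by
    intro t
    have h5 : P t = Ef t + exp ((t : ℂ) • Ac) := by simp [hEf]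
    have h7 : (P t).map (starRingEnd ℂ)
        = (Ef t).map (starRingEnd ℂ) + exp ((t : ℂ) • Ac) := by
      conv_lhs => rw [h5]
      have h8 := hexpconj t
      ext i j
      simp only [Matrix.map_apply, Matrix.add_apply, map_add]
      congr 1
      have := congrFun (congrFun h8 i) j
      simpa [Matrix.map_apply] using this
    simp only [hQf]
    rw [h7]
    conv_lhs => rw [h5]
    abel
  have hσEO : (fun t => (Ef t).map (starRingEnd ℂ)) =O[nhds 0] (fun t => t ^ (2*n+1)) :=
    isBigO_map_conj hEO
  have hQO : Qf =O[nhds 0] fun t => t ^ (2*n+1) := by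
    have : Qf = fun t => Ef t - (Ef t).map (starRingEnd ℂ) := funext hQE
    rw [this]
    exact hEO.sub hσEO
  -- `Q` is analytic at `0`
  have hσPanal : AnalyticAt ℝ (fun t => (P t).map (starRingEnd ℂ)) 0 := by
    apply analyticAt_matrix
    intro i j
    have hco : AnalyticAt ℝ (fun z : ℂ => (starRingEnd ℂ) z) ((fun t : ℝ => P t i j) 0) := by
      have := (Complex.conjCLE.toContinuousLinearMap).analyticAt ((fun t : ℝ => P t i j) 0)
      exact this
    have h9 := AnalyticAt.comp (𝕜 := ℝ) (g := fun z : ℂ => (starRingEnd ℂ) z)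
      (f := fun t : ℝ => P t i j) (x := (0:ℝ)) hco (analyticAt_entry hPanal i j)
    simpa [Function.comp_def, Matrix.map_apply] using h9
  have hQanal : AnalyticAt ℝ Qf 0 := hPanal.sub hσPanal
  -- Taylor coefficient of `Q` at order `2n+1`
  obtain ⟨c, hc⟩ := keyR (2*n+1) Qf hQanal (hQO.mono nhdsWithin_le_nhds)
  -- (1 - exp(±t Ac)) = O(t)
  have hP1 : (fun t : ℝ => P t - 1) =O[nhds 0] fun t => t ^ 1 := by
    have h := hPanal.differentiableAt.isBigO_sub
    simp only [sub_zero, hP0] at h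
    simpa only [pow_one] using h
  have hXO : (fun t : ℝ => exp ((t : ℂ) • Ac) - 1) =O[nhds 0] fun t => t ^ 1 := by
    have h10 : (fun t : ℝ => exp ((t : ℂ) • Ac) - 1) = fun t => (P t - 1) - Ef t := by
      funext t; simp only [hEf]; abel
    rw [h10]
    exact hP1.sub (hEO.trans (pow_isBigO_pow (by omega)))
  have hXnegO : (fun t : ℝ => exp (-((t : ℂ) • Ac)) - 1) =O[nhds 0] fun t => t ^ 1 := by
    have h11 := isBigO_comp_neg hXO
    refine IsBigO.congr' h11 (Filter.Eventually.of_forall fun t => ?_) EventuallyEq.rfl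
    simp only [hcast]
  -- the key exact identity coming from symmetric-conjugacy and time-symmetry
  have hkey : ∀ t : ℝ,
      (exp (-((t : ℂ) • Ac)) * Ef t + (Ef (-t)).map (starRingEnd ℂ) * exp ((t : ℂ) • Ac))
        + (Ef (-t)).map (starRingEnd ℂ) * Ef t = 0 := by
    intro t
    have h1 : (P (-t)).map (starRingEnd ℂ) * P t = 1 := hσPinv t
    have h3 : P (-t) = exp (-((t : ℂ) • Ac)) + Ef (-t) := by
      simp only [hEf]
      rw [hcast t]
      abel
    have h2 : (P (-t)).map (starRingEnd ℂ)
        = exp (-((t : ℂ) • Ac)) + (Ef (-t)).map (starRingEnd ℂ) := by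
      rw [h3]
      have h8 := hexpconj (-t)
      rw [hcast t] at h8
      ext i j
      simp only [Matrix.map_apply, Matrix.add_apply, map_add]
      congr 1
      have := congrFun (congrFun h8 i) j
      simpa [Matrix.map_apply] using this
    have h5 : P t = exp ((t : ℂ) • Ac) + Ef t := by simp [hEf]
    rw [h2, h5] at h1
    have h6 : exp (-((t : ℂ) • Ac)) * exp ((t : ℂ) • Ac) = 1 := exp_inv_mul _
    have h7 : (exp (-((t : ℂ) • Ac)) + (Ef (-t)).map (starRingEnd ℂ))
          * (exp ((t : ℂ) • Ac) + Ef t)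
        = exp (-((t : ℂ) • Ac)) * exp ((t : ℂ) • Ac)
          + ((exp (-((t : ℂ) • Ac)) * Ef t
              + (Ef (-t)).map (starRingEnd ℂ) * exp ((t : ℂ) • Ac))
            + (Ef (-t)).map (starRingEnd ℂ) * Ef t) := by noncomm_ring
    rw [h7, h6] at h1
    have h8 : (1 : Matrix (Fin (m+m)) (Fin (m+m)) ℂ)
        + ((exp (-((t : ℂ) • Ac)) * Ef t
            + (Ef (-t)).map (starRingEnd ℂ) * exp ((t : ℂ) • Ac))
          + (Ef (-t)).map (starRingEnd ℂ) * Ef t) = 1 + 0 := by rw [add_zero]; exact h1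
    exact add_left_cancel h8
  -- `Ef t + conj (Ef (-t)) = O(t^{2n+2})`
  have hσEnegO : (fun t => (Ef (-t)).map (starRingEnd ℂ)) =O[nhds 0] (fun t => t ^ (2*n+1)) :=
    isBigO_map_conj (isBigO_comp_neg hEO)
  have h1mXn : (fun t : ℝ => 1 - exp (-((t : ℂ) • Ac))) =O[nhds 0] fun t => t ^ 1 := by
    have := hXnegO.neg_left
    refine IsBigO.congr' this (Filter.Eventually.of_forall fun t => ?_) EventuallyEq.rfl
    simp only [neg_sub]
  have h1mXp : (fun t : ℝ => 1 - exp ((t : ℂ) • Ac)) =O[nhds 0] fun t => t ^ 1 := by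
    have := hXO.neg_left
    refine IsBigO.congr' this (Filter.Eventually.of_forall fun t => ?_) EventuallyEq.rfl
    simp only [neg_sub]
  have hWO : (fun t => Ef t + (Ef (-t)).map (starRingEnd ℂ)) =O[nhds 0]
      fun t => t ^ (2*n+2) := by
    have hid : ∀ t : ℝ, Ef t + (Ef (-t)).map (starRingEnd ℂ)
        = ((1 - exp (-((t : ℂ) • Ac))) * Ef t
            + (Ef (-t)).map (starRingEnd ℂ) * (1 - exp ((t : ℂ) • Ac))
            - (Ef (-t)).map (starRingEnd ℂ) * Ef t)
          + ((exp (-((t : ℂ) • Ac)) * Ef t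
              + (Ef (-t)).map (starRingEnd ℂ) * exp ((t : ℂ) • Ac))
            + (Ef (-t)).map (starRingEnd ℂ) * Ef t) := by
      intro t; noncomm_ring
    have hid2 : (fun t => Ef t + (Ef (-t)).map (starRingEnd ℂ))
        = fun t : ℝ => (1 - exp (-((t : ℂ) • Ac))) * Ef t
            + (Ef (-t)).map (starRingEnd ℂ) * (1 - exp ((t : ℂ) • Ac))
            - (Ef (-t)).map (starRingEnd ℂ) * Ef t := by
      funext t
      rw [hid t, hkey t, add_zero]
    rw [hid2]
    have t1 : (fun t : ℝ => (1 - exp (-((t : ℂ) • Ac))) * Ef t) =O[nhds 0]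
        fun t => t ^ (2*n+2) := by
      have h := isBigO_matmul h1mXn hEO
      refine h.trans (IsBigO.of_bound 1 (Filter.Eventually.of_forall fun t => ?_))
      rw [one_mul, ← pow_add, show 1+(2*n+1) = 2*n+2 from by omega]
    have t2 : (fun t : ℝ => (Ef (-t)).map (starRingEnd ℂ) * (1 - exp ((t : ℂ) • Ac)))
        =O[nhds 0] fun t => t ^ (2*n+2) := by
      have h := isBigO_matmul hσEnegO h1mXp
      refine h.trans (IsBigO.of_bound 1 (Filter.Eventually.of_forall fun t => ?_))
      rw [one_mul, ← pow_add, show (2*n+1)+1 = 2*n+2 from by omega]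
    have t3 : (fun t : ℝ => (Ef (-t)).map (starRingEnd ℂ) * Ef t) =O[nhds 0]
        fun t => t ^ (2*n+2) := by
      have h := isBigO_matmul hσEnegO hEO
      refine IsBigO.trans ?_ (pow_isBigO_pow (show 2*n+2 ≤ (2*n+1)+(2*n+1) by omega))
      refine h.trans (IsBigO.of_bound 1 (Filter.Eventually.of_forall fun t => ?_))
      rw [one_mul, ← pow_add]
    exact (t1.add t2).sub t3
  -- hence the leading Taylor coefficient of `Q` vanishes
  have hW2O : (fun t => Ef (-t) + (Ef t).map (starRingEnd ℂ)) =O[nhds 0]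
      fun t => t ^ (2*n+2) := by
    have h := isBigO_comp_neg hWO
    refine IsBigO.congr' h (Filter.Eventually.of_forall fun t => ?_) EventuallyEq.rfl
    simp only [neg_neg]
  have hQdiff : (fun t => Qf t - Qf (-t)) =O[nhds 0] fun t => t ^ (2*n+2) := by
    have hid3 : (fun t => Qf t - Qf (-t))
        = fun t => (Ef t + (Ef (-t)).map (starRingEnd ℂ))
            - (Ef (-t) + (Ef t).map (starRingEnd ℂ)) := by
      funext t
      rw [hQE t, hQE (-t)]
      abel
    rw [hid3]
    exact hWO.sub hW2O
  have hcneg : (fun t => Qf (-t) - (-t) ^ (2*n+1) • c) =O[nhds 0]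
      fun t => t ^ (2*n+1+1) := isBigO_comp_neg hc
  have hcc : (fun t : ℝ => t ^ (2*n+1) • ((2:ℝ) • c)) =O[nhds 0] fun t => t ^ (2*n+1+1) := by
    have hid4 : (fun t : ℝ => t ^ (2*n+1) • ((2:ℝ) • c))
        = fun t => ((Qf t - Qf (-t)) - (Qf t - t ^ (2*n+1) • c))
            + (Qf (-t) - (-t) ^ (2*n+1) • c) := by
      funext t
      have hodd : (-t) ^ (2*n+1) = -(t ^ (2*n+1)) := Odd.neg_pow ⟨n, by ring⟩ t
      rw [hodd]
      module
    rw [hid4]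
    have hexp_eq : 2*n+1+1 = 2*n+2 := by omega
    rw [hexp_eq]
    refine IsBigO.add (hQdiff.sub ?_) ?_
    · rw [← hexp_eq]; exact hc
    · rw [← hexp_eq]; exact hcneg
  have hc0 : c = 0 := by
    have h2c : (2:ℝ) • c = 0 := eq_zero_of_isBigO_pow_succ hcc
    have := smul_eq_zero.1 h2c
    rcases this with h | h
    · norm_num at h
    · exact h
  rw [hc0] at hc
  simp only [smul_zero, sub_zero] at hc
  -- `Q = O(t^{2n+2})`, now conclude by the exact symplecticity identity
  have hQTO : (fun t => (Qf t)ᵀ) =O[nhds 0] fun t => t ^ (2*n+1+1) := isBigO_transpose hc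
  have hJcO : (fun _ : ℝ => Jc) =O[nhds 0] (fun _ => (1:ℝ)) :=
    isBigO_const_const _ one_ne_zero _
  have hQJQ : (fun t => (Qf t)ᵀ * Jc * Qf t) =O[nhds 0] fun t => t ^ (4*n+4) := by
    have h10 := isBigO_matmul (isBigO_matmul hQTO hJcO) hc
    refine h10.trans (IsBigO.of_bound 1 (Filter.Eventually.of_forall fun t => ?_))
    have : t ^ (2*n+1+1) * 1 * t ^ (2*n+1+1) = t ^ (4*n+4) := by ring
    rw [this, one_mul]
  -- conjugate symplecticity
  have σmul : ∀ X Y : Matrix (Fin (m+m)) (Fin (m+m)) ℂ,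
      (X * Y).map (starRingEnd ℂ) = X.map (starRingEnd ℂ) * Y.map (starRingEnd ℂ) := by
    intro X Y
    simpa [RingHom.mapMatrix_apply] using
      map_mul ((starRingEnd ℂ).mapMatrix : Matrix (Fin (m+m)) (Fin (m+m)) ℂ →+* _) X Y
  have hJcc : Jc.map (starRingEnd ℂ) = Jc := by
    ext i j
    simp [hJcdef, Matrix.map_apply, Complex.conj_ofReal]
  have hσsym : ∀ t : ℝ, ((P t).map (starRingEnd ℂ))ᵀ * Jc * ((P t).map (starRingEnd ℂ))
      = Jc := by
    intro t
    have h11 := congrArg (fun M : Matrix (Fin (m+m)) (Fin (m+m)) ℂ =>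
      M.map (starRingEnd ℂ)) (hsymP t)
    rw [σmul, σmul, Matrix.transpose_map, hJcc] at h11
    exact h11
  -- the real part
  have hRc : ∀ t : ℝ, ((P t).map Complex.re).map Complex.ofReal
      = (2:ℂ)⁻¹ • (P t + (P t).map (starRingEnd ℂ)) := by
    intro t
    ext i j
    simp only [Matrix.map_apply, Matrix.smul_apply, Matrix.add_apply, smul_eq_mul]
    rw [Complex.add_conj]
    push_cast
    ring
  have hmain : ∀ t : ℝ,
      ((((P t).map Complex.re).map Complex.ofReal)ᵀ * Jc
          * (((P t).map Complex.re).map Complex.ofReal)) - Jc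
        = (-(4:ℂ)⁻¹) • ((Qf t)ᵀ * Jc * Qf t) := by
    intro t
    have hX : (P t)ᵀ * Jc * P t = Jc := hsymP t
    have hY := hσsym t
    rw [hRc t]
    set X := P t with hXdef
    set Y := (P t).map (starRingEnd ℂ) with hYdef
    have e1 : (X + Y)ᵀ * Jc * (X + Y)
        = Xᵀ*Jc*X + Xᵀ*Jc*Y + Yᵀ*Jc*X + Yᵀ*Jc*Y := by
      rw [Matrix.transpose_add]; noncomm_ring
    have e2 : (X - Y)ᵀ * Jc * (X - Y)
        = Xᵀ*Jc*X - Xᵀ*Jc*Y - Yᵀ*Jc*X + Yᵀ*Jc*Y := by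
      rw [Matrix.transpose_sub]; noncomm_ring
    have hQ : Qf t = X - Y := rfl
    rw [hQ, Matrix.transpose_smul, Matrix.smul_mul, Matrix.smul_mul, Matrix.mul_smul,
      smul_smul, e1, e2, hX, hY]
    module
  -- transfer to the real side
  have hnormmap : ∀ M : Matrix (Fin (m+m)) (Fin (m+m)) ℝ, ‖M.map Complex.ofReal‖ = ‖M‖ :=
    fun M => Matrix.norm_map_eq M _ fun a => Complex.norm_real a
  have hmapG : ∀ t : ℝ, (((R t)ᵀ * canonicalJ m * R t - canonicalJ m)).map Complex.ofReal
      = (((P t).map Complex.re).map Complex.ofReal)ᵀ * Jc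
          * (((P t).map Complex.re).map Complex.ofReal) - Jc := by
    intro t
    have ofmul : ∀ X Y : Matrix (Fin (m+m)) (Fin (m+m)) ℝ,
        (X * Y).map Complex.ofReal = X.map Complex.ofReal * Y.map Complex.ofReal := by
      intro X Y
      exact Matrix.map_mul (f := Complex.ofRealHom)
    have ofsub : ∀ X Y : Matrix (Fin (m+m)) (Fin (m+m)) ℝ,
        (X - Y).map Complex.ofReal = X.map Complex.ofReal - Y.map Complex.ofReal := by
      intro X Y
      exact
        map_sub ((Complex.ofRealHom).mapMatrix : Matrix (Fin (m+m)) (Fin (m+m)) ℝ →+* _) X Y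
    rw [ofsub, ofmul, ofmul, Matrix.transpose_map, hR t]
  have hfinal : (fun t => (-(4:ℂ)⁻¹) • ((Qf t)ᵀ * Jc * Qf t)) =O[nhds 0]
      fun t => t ^ (4*n+4) :=
    (hQJQ.const_smul_left (-(4:ℂ)⁻¹)).congr_left fun t => rfl
  refine IsBigO.trans (IsBigO.of_bound 1 (Filter.Eventually.of_forall fun t => ?_)) hfinal
  rw [one_mul, ← hmain t, ← hmapG t, hnormmap]
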